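/- For p ∈ (0,1/2) and ρ ∈ [1/3, 1/2]: 1 - ρ - (q-p)(3ρ-1)(1 - ρ + 4pρ) ≥ p + ρ(1-2p)(1-4p)/2 > 0, where q = 1-p. Hence the function g(ρ) = log₂(ρ/(1-ρ))·(1-p/q) + (p/q)·log₂(1 - (q-p)²((3ρ-1)/(1-ρ))²) is increasing on [1/3, 1/2]. -/

import Mathlib

set_option maxHeartbeats 2000000


theorem g_rho_increasing (p q ρ : ℝ)
    (hp0 : 0 < p) (hp2 : p < 1/2) (hq : q = 1 - p)
    (hρ : ρ ∈ Set.Icc (1/3 : ℝ) (1/2)) :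
    (1 - ρ - (q-p)*(3*ρ-1)*(1 - ρ + 4*p*ρ) ≥ p + ρ*(1-2*p)*(1-4*p)/2) ∧
    (0 < p + ρ*(1-2*p)*(1-4*p)/2) ∧
    StrictMonoOn (fun r : ℝ =>
        Real.logb 2 (r/(1-r)) * (1 - p/q)
          + (p/q) * Real.logb 2 (1 - (q-p)^2 * ((3*r-1)/(1-r))^2))
      (Set.Icc (1/3 : ℝ) (1/2)) := by
  subst hq
  obtain ⟨hρ1, hρ2⟩ := hρ
  have hq0 : (0:ℝ) < 1 - p := by linarith
  have hL : (0:ℝ) < Real.log 2 := Real.log_pos (by norm_num)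
  refine ⟨?_, ?_, ?_⟩
  · have g13 : (0:ℝ) ≤ 3/2 - 4*p^2 := by nlinarith
    have g12 : (0:ℝ) ≤ 5/4 + 3*p/2 - 6*p^2 := by nlinarith
    have hG : (0:ℝ) ≤ 2 - 3*p - 3/2*(1-2*p)*(1-4*p)*ρ := by
      nlinarith [mul_nonneg (by linarith : (0:ℝ) ≤ 1/2 - ρ) g13,
        mul_nonneg (by linarith : (0:ℝ) ≤ ρ - 1/3) g12]
    have hid : 1 - ρ - (1-p-p)*(3*ρ-1)*(1 - ρ + 4*p*ρ) - (p + ρ*(1-2*p)*(1-4*p)/2)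
        = (1-2*ρ)*(2 - 3*p - 3/2*(1-2*p)*(1-4*p)*ρ) := by ring
    nlinarith [mul_nonneg (by linarith : (0:ℝ) ≤ 1 - 2*ρ) hG]
  · nlinarith [sq_nonneg (4*p-1)]
  · simp only [← Real.log_div_log]
    -- helper: derivative at each point of the closed interval
    have hder : ∀ x : ℝ, 1/3 ≤ x → x ≤ 1/2 →
        HasDerivAt (fun r : ℝ =>
          Real.log (r/(1-r)) / Real.log 2 * (1 - p/(1-p))
            + p/(1-p) * (Real.log (1 - (1-p-p)^2 * ((3*r-1)/(1-r))^2) / Real.log 2))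
          ((1-p-p) * ((1-x)^2 - (1-p-p)^2*(3*x-1)^2 - 4*p*(1-p-p)*(3*x-1)*x)
            / ((1-p) * (x * ((1-x) * (((1-x)^2 - (1-p-p)^2*(3*x-1)^2) * Real.log 2))))) x := by
      intro x hx1 hx2
      have hx0 : (0:ℝ) < x := by linarith
      have h1x : (0:ℝ) < 1 - x := by linarith
      have h1xne : (1:ℝ) - x ≠ 0 := ne_of_gt h1x
      have hu_pos : 0 < x / (1-x) := div_pos hx0 h1x
      have hu_ne : x/(1-x) ≠ 0 := ne_of_gt hu_pos
      have hV : (0:ℝ) < (1-x)^2 - (1-p-p)^2*(3*x-1)^2 := by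
        have hc1 : (1-p-p)^2 < 1 := by nlinarith
        have h31 : (3*x-1)^2 ≤ (1-x)^2 := by nlinarith
        have t1 : (1-p-p)^2*(3*x-1)^2 ≤ (1-p-p)^2*(1-x)^2 :=
          mul_le_mul_of_nonneg_left h31 (sq_nonneg _)
        have t2 : (1-p-p)^2*(1-x)^2 < 1*(1-x)^2 :=
          mul_lt_mul_of_pos_right hc1 (by positivity)
        linarith
      have hv_pos : (0:ℝ) < 1 - (1-p-p)^2 * ((3*x-1)/(1-x))^2 := by
        have : 1 - (1-p-p)^2 * ((3*x-1)/(1-x))^2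
            = ((1-x)^2 - (1-p-p)^2*(3*x-1)^2) / (1-x)^2 := by
          field_simp
        rw [this]
        positivity
      have hv_ne : 1 - (1-p-p)^2 * ((3*x-1)/(1-x))^2 ≠ 0 := ne_of_gt hv_pos
      have hu : HasDerivAt (fun r : ℝ => r / (1-r))
          ((1*(1-x) - x*(-1))/(1-x)^2) x :=
        (hasDerivAt_id x).div ((hasDerivAt_id x).const_sub 1) h1xne
      have hw : HasDerivAt (fun r : ℝ => (3*r-1)/(1-r))
          ((3*1*(1-x) - (3*x-1)*(-1))/(1-x)^2) x :=
        (((hasDerivAt_id x).const_mul 3).sub_const 1).div ((hasDerivAt_id x).const_sub 1) h1xne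
      have hv : HasDerivAt (fun r : ℝ => 1 - (1-p-p)^2 * ((3*r-1)/(1-r))^2)
          (-((1-p-p)^2 * (2 * ((3*x-1)/(1-x))^1 * ((3*1*(1-x) - (3*x-1)*(-1))/(1-x)^2)))) x :=
        ((hw.pow 2).const_mul ((1-p-p)^2)).const_sub 1
      have h := (((hu.log hu_ne).div_const (Real.log 2)).mul_const (1 - p/(1-p))).add
        (((hv.log hv_ne).div_const (Real.log 2)).const_mul (p/(1-p)))
      exact h.congr_deriv (by
        have e : 1 - (1-p-p)^2 * ((3*x-1)/(1-x))^2
            = ((1-x)^2 - (1-p-p)^2*(3*x-1)^2) / (1-x)^2 := by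
          field_simp
        rw [e]
        generalize hVd : (1-x)^2 - (1-p-p)^2*(3*x-1)^2 = V at hV ⊢
        field_simp
        rw [← hVd]
        ring)
    apply strictMonoOn_of_deriv_pos (convex_Icc _ _)
    · intro x hx
      exact (hder x hx.1 hx.2).continuousAt.continuousWithinAt
    · intro x hx
      rw [interior_Icc] at hx
      obtain ⟨hx1, hx2⟩ := hx
      rw [(hder x hx1.le hx2.le).deriv]
      have hx0 : (0:ℝ) < x := by linarith
      have h1x : (0:ℝ) < 1 - x := by linarith
      have hV : (0:ℝ) < (1-x)^2 - (1-p-p)^2*(3*x-1)^2 := by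
        have hc1 : (1-p-p)^2 < 1 := by nlinarith
        have h31 : (3*x-1)^2 ≤ (1-x)^2 := by nlinarith
        have t1 : (1-p-p)^2*(3*x-1)^2 ≤ (1-p-p)^2*(1-x)^2 :=
          mul_le_mul_of_nonneg_left h31 (sq_nonneg _)
        have t2 : (1-p-p)^2*(1-x)^2 < 1*(1-x)^2 :=
          mul_lt_mul_of_pos_right hc1 (by positivity)
        linarith
      apply div_pos
      · have hB : (0:ℝ) < (1-x)^2 - (1-p-p)^2*(3*x-1)^2 - 4*p*(1-p-p)*(3*x-1)*x := by
          have hfac : (1-x)^2 - (1-p-p)^2*(3*x-1)^2 - 4*p*(1-p-p)*(3*x-1)*x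
              = p^2 + (1-2*x)*((4-12*p+6*p^2)*x + 4*p-5*p^2) := by ring
          have f13 : (0:ℝ) ≤ (4-12*p+6*p^2)*(1/3) + 4*p-5*p^2 := by nlinarith
          have f12 : (0:ℝ) ≤ (4-12*p+6*p^2)*(1/2) + 4*p-5*p^2 := by nlinarith
          have hF : (0:ℝ) ≤ (4-12*p+6*p^2)*x + 4*p-5*p^2 := by
            nlinarith [mul_nonneg (by linarith : (0:ℝ) ≤ 1/2 - x) f13,
              mul_nonneg (by linarith : (0:ℝ) ≤ x - 1/3) f12]
          nlinarith [mul_nonneg (by linarith : (0:ℝ) ≤ 1-2*x) hF]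
        have hc : (0:ℝ) < 1-p-p := by linarith
        exact mul_pos hc hB
      · positivity
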